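/- Let E be a row-finite directed graph, and let H be a hereditary subset of E⁰. Consider the free commutative monoid F on the vertex set of the covering graph, with the rewriting relation →₁ replacing a vertex v (which is not a sink) by the sum of r(e) over e ∈ s⁻¹(v), and → its reflexive transitive closure extended additively. If a and b are elements of F supported on H and a → γ, then γ is supported on H. -/

import Mathlib

open Finsupp

/-- One step of the rewriting relation `→₁` on the free commutative monoid on the
vertices `V' = V × ℤ` of the covering graph `E ×₁ ℤ` of a graph `(V, E, s, r)`:
replace a non-sink vertex `(v, n)` by the sum of the ranges `(r e, n − 1)` of its
outgoing edges `{(e, n) | s e = v}`. -/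
def coverStep {V E : Type*} (s r : E → V) (a b : (V × ℤ) →₀ ℕ) : Prop :=
  ∃ (v : V) (n : ℤ) (α : (V × ℤ) →₀ ℕ), (∃ e, s e = v) ∧
    a = α + Finsupp.single (v, n) 1 ∧
    b = α + ∑ᶠ e ∈ {e : E | s e = v}, Finsupp.single (r e, n - 1) 1

lemma coverStep_support {V E : Type*} (s r : E → V)
    (hrow : ∀ v, {e : E | s e = v}.Finite)
    (H : Set V) (hH : ∀ e, s e ∈ H → r e ∈ H)
    (a b : (V × ℤ) →₀ ℕ)
    (ha : ∀ p ∈ a.support, p.1 ∈ H) (hstep : coverStep s r a b) :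
    ∀ p ∈ b.support, p.1 ∈ H := by
  obtain ⟨v, n, α, -, rfl, rfl⟩ := hstep
  have hv : v ∈ H := by
    have : (v, n) ∈ (α + Finsupp.single (v, n) 1).support := by
      simp [Finsupp.mem_support_iff]
    exact ha _ this
  intro p hp
  rw [Finsupp.mem_support_iff] at hp
  rw [Finsupp.add_apply] at hp
  rcases Nat.eq_zero_or_pos (α p) with h0 | h0
  · rw [h0, zero_add] at hp
    rw [finsum_mem_eq_finite_toFinset_sum _ (hrow v)] at hp
    rw [Finsupp.finset_sum_apply] at hp
    obtain ⟨e, he, hne⟩ := Finset.exists_ne_zero_of_sum_ne_zero hp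
    have hse : s e = v := (hrow v).mem_toFinset.mp he
    have : p = (r e, n - 1) := by
      by_contra hne'
      exact hne (Finsupp.single_eq_of_ne' fun h => hne' h.symm)
    rw [this]
    exact hH e (hse ▸ hv)
  · have : p ∈ (α + Finsupp.single (v, n) 1).support := by
      rw [Finsupp.mem_support_iff, Finsupp.add_apply]
      omega
    exact ha _ this

/-- for a row-finite graph `E` and a hereditary subset `H` of its vertices,
if `a` and `b` are elements of the free commutative monoid on the vertices of the
covering graph that are supported on `H` (i.e. on `H × ℤ`) and `a → γ` (reflexive
transitive closure of `→₁`), then `γ` is supported on `H`. -/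
theorem stmt_7 {V E : Type*} (s r : E → V)
    (hrow : ∀ v, {e : E | s e = v}.Finite)
    (H : Set V) (hH : ∀ e, s e ∈ H → r e ∈ H)
    (a b γ : (V × ℤ) →₀ ℕ)
    (ha : ∀ p ∈ a.support, p.1 ∈ H) (hb : ∀ p ∈ b.support, p.1 ∈ H)
    (hstep : Relation.ReflTransGen (coverStep s r) a γ) :
    ∀ p ∈ γ.support, p.1 ∈ H := by
  induction hstep with
  | refl => exact ha
  | tail _ h ih => exact coverStep_support s r hrow H hH _ _ ih h
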